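/- Let k ≤ ⌊(d−1)/2⌋ and suppose φ ∈ S_d^* satisfies φ(L_1^{n_1} ⋯ L_r^{n_r} · h) = 0 for all h ∈ S_{d−k−1}, where L_1,...,L_r are pairwise non-proportional linear forms, Σ n_i = k+1, and n_1 ≥ 2. If additionally φ is a linear combination of d−k evaluation functionals φ = Σ_{j=1}^{d−k} λ_j ev(α_j), then φ is a linear combination of the evaluations at the zeros of those L_i whose zero classes occur among the [α_j]. In particular, if moreover φ does not vanish on L_1 ⋯ L_s · S_{d−s} for any s ≤ k with any choice of s of the forms L_i, then no such decomposition into d−k evaluations exists. -/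

import Mathlib

open MvPolynomial Finset

noncomputable section

def linForm (K : Type) [Field K] (c : Fin 2 → K) : MvPolynomial (Fin 2) K :=
  C (c 0) * X 0 + C (c 1) * X 1

/-- `α` is not a scalar multiple of `β` (for nonzero vectors: distinct points of `ℙ¹`). -/
def NonProp (K : Type) [Field K] (α β : Fin 2 → K) : Prop := ∀ t : K, α ≠ t • β

/-- The Waring rank of a binary form: the least `r` such that `q` is a sum of `r`
`d`-th powers of linear forms. -/
def waringRank (K : Type) [Field K] (d : ℕ) (q : MvPolynomial (Fin 2) K) : ℕ :=
  sInf {r : ℕ | ∃ L : Fin r → Fin 2 → K, q = ∑ i, linForm K (L i) ^ d}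

variable {K : Type} [Field K]

lemma eval_linForm (cc x : Fin 2 → K) :
    eval x (linForm K cc) = cc 0 * x 0 + cc 1 * x 1 := by
  simp [linForm]

lemma isHomogeneous_linForm (cc : Fin 2 → K) : (linForm K cc).IsHomogeneous 1 :=
  (isHomogeneous_C_mul_X (cc 0) 0).add (isHomogeneous_C_mul_X (cc 1) 1)

lemma perp {a b x : Fin 2 → K} (hx : x ≠ 0) (hb : b ≠ 0)
    (ha : a 0 * x 0 + a 1 * x 1 = 0) (hbx : b 0 * x 0 + b 1 * x 1 = 0) :
    ∃ t : K, a = t • b := by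
  have hcross : a 0 * b 1 - a 1 * b 0 = 0 := by
    have h0 : (a 0 * b 1 - a 1 * b 0) * x 0 = 0 := by linear_combination b 1 * ha - a 1 * hbx
    have h1 : (a 0 * b 1 - a 1 * b 0) * x 1 = 0 := by linear_combination a 0 * hbx - b 0 * ha
    by_contra hne
    apply hx
    funext i
    fin_cases i
    · simpa using (mul_eq_zero.mp h0).resolve_left hne
    · simpa using (mul_eq_zero.mp h1).resolve_left hne
  rcases Function.ne_iff.mp hb with ⟨i, hi⟩
  simp only [Pi.zero_apply] at hi
  fin_cases i
  · have hi' : b 0 ≠ 0 := hi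
    refine ⟨a 0 / b 0, ?_⟩
    funext j
    fin_cases j
    · show a 0 = a 0 / b 0 * b 0
      rw [div_mul_cancel₀ _ hi']
    · show a 1 = a 0 / b 0 * b 1
      rw [div_mul_eq_mul_div, eq_div_iff hi']
      linear_combination -hcross
  · have hi' : b 1 ≠ 0 := hi
    refine ⟨a 1 / b 1, ?_⟩
    funext j
    fin_cases j
    · show a 0 = a 1 / b 1 * b 0
      rw [div_mul_eq_mul_div, eq_div_iff hi']
      linear_combination hcross
    · show a 1 = a 1 / b 1 * b 1
      rw [div_mul_cancel₀ _ hi']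

lemma eval_smul_isHomogeneous {m : ℕ} {f : MvPolynomial (Fin 2) K}
    (hf : f.IsHomogeneous m) (t : K) (x : Fin 2 → K) :
    eval (t • x) f = t ^ m * eval x f := by
  classical
  rw [eval_eq', eval_eq', Finset.mul_sum]
  refine Finset.sum_congr rfl fun dd hd => ?_
  have hdm : ∑ i, dd i = m := by
    have h1 : Finsupp.weight (1 : Fin 2 → ℕ) dd = m := hf (mem_support_iff.mp hd)
    change Finsupp.weight (fun _ => 1) dd = m at h1
    rw [← Finsupp.degree_eq_weight_one] at h1
    rw [← h1, Finsupp.degree_apply]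
    exact (Finset.sum_subset (Finset.subset_univ _)
      (fun i _ hi => Finsupp.notMem_support_iff.mp hi)).symm
  have hstep : ∀ i : Fin 2, (t • x) i ^ dd i = t ^ dd i * x i ^ dd i := fun i => by
    simp [mul_pow]
  rw [Finset.prod_congr rfl fun i _ => hstep i, Finset.prod_mul_distrib,
    Finset.prod_pow_eq_pow_sum, hdm]
  ring

lemma vec_ne_zero_of_coord {v : Fin 2 → K} {i : Fin 2} (h : v i ≠ 0) : v ≠ 0 :=
  fun hv => h (by rw [hv]; rfl)

lemma nonzero_coord {v : Fin 2 → K} (hv : v ≠ 0) : v 0 ≠ 0 ∨ v 1 ≠ 0 := by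
  by_contra h
  push_neg at h
  refine hv (funext fun i => ?_)
  fin_cases i
  · simpa using h.1
  · simpa using h.2

/-- A linear form vanishing exactly on the line of `v`. -/
def perpVec (v : Fin 2 → K) : Fin 2 → K := ![v 1, -(v 0)]

lemma eval_perpVec (v x : Fin 2 → K) :
    eval x (linForm K (perpVec v)) = v 1 * x 0 - v 0 * x 1 := by
  rw [eval_linForm]; simp [perpVec]; ring

lemma eval_perpVec_self (v : Fin 2 → K) : eval v (linForm K (perpVec v)) = 0 := by
  rw [eval_perpVec]; ring

lemma eval_perpVec_ne_zero {v x : Fin 2 → K} (hv : v ≠ 0) (hx : x ≠ 0)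
    (h : ∀ t : K, x ≠ t • v) : eval x (linForm K (perpVec v)) ≠ 0 := by
  intro h0
  rw [eval_perpVec] at h0
  have hpv : perpVec v ≠ 0 := by
    rcases nonzero_coord hv with h1 | h1
    · exact vec_ne_zero_of_coord (i := 1) (by simp [perpVec, h1])
    · exact vec_ne_zero_of_coord (i := 0) (by simp [perpVec, h1])
  obtain ⟨t, ht⟩ := perp (a := x) (b := v) (x := perpVec v) hpv hv
    (by simp [perpVec]; linear_combination h0) (by simp [perpVec]; ring)
  exact h t ht

lemma indep {ι : Type*} (D : ℕ) (S : Finset ι) (p : ι → Fin 2 → K)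
    (hp : ∀ ρ ∈ S, p ρ ≠ 0)
    (hnp : ∀ ρ ∈ S, ∀ ρ' ∈ S, ρ ≠ ρ' → ∀ t : K, p ρ ≠ t • p ρ')
    (hcard : S.card ≤ D + 1) (co : ι → K)
    (hv : ∀ h : MvPolynomial (Fin 2) K, h.IsHomogeneous D →
      ∑ ρ ∈ S, co ρ * eval (p ρ) h = 0) :
    ∀ ρ ∈ S, co ρ = 0 := by
  classical
  intro ρ0 hρ0
  -- a linear form not vanishing at `p ρ0`
  obtain ⟨w, hwval⟩ : ∃ w : Fin 2 → K, eval (p ρ0) (linForm K w) ≠ 0 := by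
    rcases nonzero_coord (hp ρ0 hρ0) with h1 | h1
    · exact ⟨![1, 0], by rw [eval_linForm]; simpa using h1⟩
    · exact ⟨![0, 1], by rw [eval_linForm]; simpa using h1⟩
  set h : MvPolynomial (Fin 2) K :=
    (∏ ρ ∈ S.erase ρ0, linForm K (perpVec (p ρ))) * linForm K w ^ (D - (S.card - 1)) with hh
  have hcard' : (S.erase ρ0).card = S.card - 1 := Finset.card_erase_of_mem hρ0
  have hhom : h.IsHomogeneous D := by
    have h1 : (∏ ρ ∈ S.erase ρ0, linForm K (perpVec (p ρ))).IsHomogeneous (S.card - 1) := by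
      have := MvPolynomial.IsHomogeneous.prod (S.erase ρ0)
        (fun ρ => linForm K (perpVec (p ρ))) (fun _ => 1)
        (fun ρ _ => isHomogeneous_linForm _)
      simpa [hcard'] using this
    have h2 : (linForm K w ^ (D - (S.card - 1))).IsHomogeneous (D - (S.card - 1)) := by
      simpa using (isHomogeneous_linForm w).pow (D - (S.card - 1))
    have h3 := h1.mul h2
    have harith : S.card - 1 + (D - (S.card - 1)) = D := by omega
    rwa [harith] at h3
  have hsum := hv h hhom
  rw [Finset.sum_eq_single_of_mem ρ0 hρ0 ?side] at hsum
  · rcases mul_eq_zero.mp hsum with h' | h'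
    · exact h'
    · exfalso
      rw [hh] at h'
      rw [map_mul, map_pow] at h'
      rcases mul_eq_zero.mp h' with h'' | h''
      · rw [map_prod] at h''
        obtain ⟨ρ, hρmem, hρz⟩ := Finset.prod_eq_zero_iff.mp h''
        have hρS : ρ ∈ S := Finset.mem_of_mem_erase hρmem
        have hρne : ρ0 ≠ ρ := fun he => (Finset.ne_of_mem_erase hρmem) he.symm
        exact eval_perpVec_ne_zero (hp ρ hρS) (hp ρ0 hρ0)
          (hnp ρ0 hρ0 ρ hρS hρne) hρz
      · exact hwval (pow_eq_zero_iff'.mp h'').1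
  case side =>
    intro ρ hρS hρne
    have : eval (p ρ) h = 0 := by
      rw [hh, map_mul, map_prod]
      have : ∏ ρ' ∈ S.erase ρ0, eval (p ρ) (linForm K (perpVec (p ρ'))) = 0 :=
        Finset.prod_eq_zero (Finset.mem_erase.mpr ⟨hρne, hρS⟩) (eval_perpVec_self (p ρ))
      rw [this, zero_mul]
    rw [this, mul_zero]

lemma core {d k r : ℕ} (hr : 0 < r) (hkd : k < d)
    (φ : Module.Dual K (MvPolynomial (Fin 2) K))
    (c : Fin r → Fin 2 → K) (n : Fin r → ℕ) (β : Fin r → Fin 2 → K)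
    (hc : ∀ i, c i ≠ 0) (hnp : ∀ i j, i ≠ j → NonProp K (c i) (c j))
    (hn : ∑ i, n i = k + 1)
    (hβ : ∀ i, β i ≠ 0) (hβz : ∀ i, eval (β i) (linForm K (c i)) = 0)
    (hvan : ∀ h : MvPolynomial (Fin 2) K, h.IsHomogeneous (d - k - 1) →
      φ ((∏ i, linForm K (c i) ^ n i) * h) = 0)
    (lam : Fin (d - k) → K) (α : Fin (d - k) → Fin 2 → K) (hα : ∀ j, α j ≠ 0)
    (hdecomp : ∀ f : MvPolynomial (Fin 2) K, f.IsHomogeneous d →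
      φ f = ∑ j, lam j * eval (α j) f) :
    ∃ μ : Fin r → K,
      (∀ i, n i = 0 → μ i = 0) ∧
      (∀ i, ¬ (∃ (j : Fin (d - k)) (t : K), α j = t • β i) → μ i = 0) ∧
      ∀ f : MvPolynomial (Fin 2) K, f.IsHomogeneous d →
        φ f = ∑ i, μ i * eval (β i) f := by
  classical
  -- ## proportionality equivalence on indices
  have tne : ∀ {j j' : Fin (d - k)} {t : K}, α j = t • α j' → t ≠ 0 := by
    intro j j' t h ht0
    exact hα j (by rw [h, ht0, zero_smul])
  have rel_refl : ∀ j : Fin (d - k), ∃ t : K, α j = t • α j :=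
    fun j => ⟨1, (one_smul K (α j)).symm⟩
  have rel_symm : ∀ {j j' : Fin (d - k)}, (∃ t : K, α j = t • α j') →
      ∃ t : K, α j' = t • α j := by
    rintro j j' ⟨t, ht⟩
    exact ⟨t⁻¹, by rw [ht, inv_smul_smul₀ (tne ht)]⟩
  have rel_trans : ∀ {a b e : Fin (d - k)}, (∃ t : K, α a = t • α b) →
      (∃ t : K, α b = t • α e) → ∃ t : K, α a = t • α e := by
    rintro a b e ⟨t, ht⟩ ⟨u, hu⟩
    exact ⟨t * u, by rw [ht, hu, smul_smul]⟩
  have hnonempty : ∀ j : Fin (d - k),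
      (univ.filter (fun j' => ∃ t : K, α j = t • α j')).Nonempty :=
    fun j => ⟨j, by simp only [Finset.mem_filter, Finset.mem_univ, true_and]; exact rel_refl j⟩
  set rep : Fin (d - k) → Fin (d - k) :=
    fun j => (univ.filter (fun j' => ∃ t : K, α j = t • α j')).min' (hnonempty j) with hrepdef
  have rep_rel : ∀ j, ∃ t : K, α j = t • α (rep j) := by
    intro j
    have h := Finset.min'_mem (univ.filter (fun j' => ∃ t : K, α j = t • α j')) (hnonempty j)
    exact (Finset.mem_filter.mp h).2
  have rep_eq : ∀ j j', (∃ t : K, α j = t • α j') → rep j = rep j' := by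
    intro j j' hjj'
    have hfilter : (univ.filter (fun x => ∃ t : K, α j = t • α x)) =
        (univ.filter (fun x => ∃ t : K, α j' = t • α x)) := by
      ext x
      simp only [Finset.mem_filter, Finset.mem_univ, true_and]
      exact ⟨fun hx => rel_trans (rel_symm hjj') hx, fun hx => rel_trans hjj' hx⟩
    apply le_antisymm
    · exact Finset.min'_le _ _ (by rw [hfilter]; exact Finset.min'_mem _ _)
    · exact Finset.min'_le _ _ (by rw [← hfilter]; exact Finset.min'_mem _ _)
  have rep_idem : ∀ j, rep (rep j) = rep j := fun j => rep_eq (rep j) j (rel_symm (rep_rel j))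
  set R : Finset (Fin (d - k)) := univ.image rep with hRdef
  have hRidem : ∀ ρ ∈ R, rep ρ = ρ := by
    intro ρ hρ
    obtain ⟨j, _, rfl⟩ := Finset.mem_image.mp hρ
    exact rep_idem j
  have hRnp : ∀ ρ ∈ R, ∀ ρ' ∈ R, ρ ≠ ρ' → ∀ t : K, α ρ ≠ t • α ρ' := by
    intro ρ hρ ρ' hρ' hne' t hEq
    exact hne' (by rw [← hRidem ρ hρ, ← hRidem ρ' hρ']; exact rep_eq ρ ρ' ⟨t, hEq⟩)
  set tcoef : Fin (d - k) → K := fun j => (rep_rel j).choose with htcdef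
  have htcoef : ∀ j, α j = tcoef j • α (rep j) := fun j => (rep_rel j).choose_spec
  set CC : Fin (d - k) → K :=
    fun ρ => ∑ j ∈ univ.filter (fun j => rep j = ρ), lam j * tcoef j ^ d with hCCdef
  -- ## φ as combination over class representatives
  have hphiR : ∀ f : MvPolynomial (Fin 2) K, f.IsHomogeneous d →
      φ f = ∑ ρ ∈ R, CC ρ * eval (α ρ) f := by
    intro f hf
    rw [hdecomp f hf,
      ← Finset.sum_fiberwise_of_maps_to (g := rep) (t := R)
        (fun j _ => Finset.mem_image_of_mem rep (Finset.mem_univ j))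
        (fun j => lam j * eval (α j) f)]
    refine Finset.sum_congr rfl fun ρ _ => ?_
    rw [hCCdef, Finset.sum_mul]
    refine Finset.sum_congr rfl fun j hj => ?_
    have hjρ : rep j = ρ := by simpa using (Finset.mem_filter.mp hj).2
    rw [show α j = tcoef j • α ρ from hjρ ▸ htcoef j, eval_smul_isHomogeneous hf]
    ring
  -- ## vanishing on the ideal forces coefficients times M-values to vanish
  set M : MvPolynomial (Fin 2) K := ∏ i, linForm K (c i) ^ n i with hMdef
  have hM : M.IsHomogeneous (k + 1) := by
    have h1 := MvPolynomial.IsHomogeneous.prod univ (fun i => linForm K (c i) ^ n i)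
      (fun i => n i) (fun i _ => by simpa using (isHomogeneous_linForm (c i)).pow (n i))
    rwa [hn] at h1
  have hCM : ∀ ρ ∈ R, CC ρ * eval (α ρ) M = 0 := by
    refine indep (d - k - 1) R α (fun ρ _ => hα ρ) hRnp ?_ _ ?_
    · calc R.card ≤ (univ : Finset (Fin (d - k))).card := Finset.card_image_le
        _ = d - k := by simp
        _ ≤ d - k - 1 + 1 := by omega
    · intro h hh
      have harith : k + 1 + (d - k - 1) = d := by omega
      have hMh : (M * h).IsHomogeneous d := by
        have := hM.mul hh
        rwa [harith] at this
      calc ∑ ρ ∈ R, CC ρ * eval (α ρ) M * eval (α ρ) h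
          = ∑ ρ ∈ R, CC ρ * eval (α ρ) (M * h) := by
            refine Finset.sum_congr rfl fun ρ _ => ?_
            rw [map_mul]; ring
        _ = φ (M * h) := (hphiR _ hMh).symm
        _ = 0 := hvan h hh
  -- ## non-proportionality of the zeros β
  have βnp : ∀ i i' : Fin r, i ≠ i' → ∀ t : K, β i ≠ t • β i' := by
    intro i i' hii' t hEq
    have hzi := hβz i
    rw [eval_linForm] at hzi
    have ht : t ≠ 0 := fun h0 => hβ i (by rw [hEq, h0, zero_smul])
    have e0 : β i 0 = t * β i' 0 := by rw [hEq]; rfl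
    have e1 : β i 1 = t * β i' 1 := by rw [hEq]; rfl
    rw [e0, e1] at hzi
    have h1 : c i 0 * β i' 0 + c i 1 * β i' 1 = 0 := by
      have h2 : t * (c i 0 * β i' 0 + c i 1 * β i' 1) = 0 := by linear_combination hzi
      exact (mul_eq_zero.mp h2).resolve_left ht
    have h2 : c i' 0 * β i' 0 + c i' 1 * β i' 1 = 0 := by
      have := hβz i'
      rwa [eval_linForm] at this
    obtain ⟨u, hu⟩ := perp (hβ i') (hc i') h1 h2
    exact hnp i i' hii' u hu
  -- ## ρ not assigned to any i has nonzero M-value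
  have key1 : ∀ ρ : Fin (d - k), (¬ ∃ i : Fin r, n i ≠ 0 ∧ ∃ t : K, α ρ = t • β i) →
      eval (α ρ) M ≠ 0 := by
    intro ρ hno
    rw [hMdef, map_prod]
    refine Finset.prod_ne_zero_iff.mpr fun i _ => ?_
    rw [map_pow]
    rcases Nat.eq_zero_or_pos (n i) with hni | hni
    · rw [hni, pow_zero]; exact one_ne_zero
    · apply pow_ne_zero
      intro h0
      rw [eval_linForm] at h0
      have hb := hβz i
      rw [eval_linForm] at hb
      obtain ⟨t, ht⟩ := perp (a := α ρ) (b := β i) (x := c i) (hc i) (hβ i)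
        (by linear_combination h0) (by linear_combination hb)
      exact hno ⟨i, Nat.pos_iff_ne_zero.mp hni, t, ht⟩
  have key2 : ∀ (ρ : Fin (d - k)) (i i' : Fin r), (∃ t : K, α ρ = t • β i) →
      (∃ t : K, α ρ = t • β i') → i = i' := by
    rintro ρ i i' ⟨t, ht⟩ ⟨u, hu⟩
    by_contra hii'
    have ht0 : t ≠ 0 := fun h0 => hα ρ (by rw [ht, h0, zero_smul])
    refine βnp i i' hii' (t⁻¹ * u) ?_
    have hbi : β i = t⁻¹ • α ρ := by rw [ht, inv_smul_smul₀ ht0]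
    rw [hbi, hu, smul_smul]
  -- ## the assignment map and the coefficients μ
  set g : Fin (d - k) → Fin r := fun ρ =>
    if h : ∃ i : Fin r, n i ≠ 0 ∧ ∃ t : K, α ρ = t • β i then h.choose else ⟨0, hr⟩
    with hgdef
  have hg : ∀ ρ, (∃ i : Fin r, n i ≠ 0 ∧ ∃ t : K, α ρ = t • β i) →
      n (g ρ) ≠ 0 ∧ ∃ t : K, α ρ = t • β (g ρ) := by
    intro ρ h
    simp only [hgdef, dif_pos h]
    exact h.choose_spec
  set u : Fin (d - k) → K := fun ρ =>
    if h : ∃ i : Fin r, n i ≠ 0 ∧ ∃ t : K, α ρ = t • β i then (hg ρ h).2.choose else 0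
    with hudef
  have hu : ∀ ρ (h : ∃ i : Fin r, n i ≠ 0 ∧ ∃ t : K, α ρ = t • β i),
      α ρ = u ρ • β (g ρ) := by
    intro ρ h
    simp only [hudef, dif_pos h]
    exact (hg ρ h).2.choose_spec
  set R₁ : Finset (Fin (d - k)) :=
    R.filter (fun ρ => ∃ i : Fin r, n i ≠ 0 ∧ ∃ t : K, α ρ = t • β i) with hR₁def
  set μ : Fin r → K :=
    fun i => ∑ ρ ∈ R₁.filter (fun ρ => g ρ = i), CC ρ * u ρ ^ d with hμdef
  refine ⟨μ, ?_, ?_, ?_⟩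
  · -- n i = 0 → μ i = 0
    intro i hni
    refine Finset.sum_eq_zero fun ρ hρ => absurd hni ?_
    obtain ⟨hρR₁, hgρ⟩ := Finset.mem_filter.mp hρ
    have hex := (Finset.mem_filter.mp hρR₁).2
    have := (hg ρ hex).1
    rw [hgρ] at this
    exact this
  · -- no α j proportional to β i → μ i = 0
    intro i hno
    refine Finset.sum_eq_zero fun ρ hρ => absurd ?_ (fun h => hno h)
    obtain ⟨hρR₁, hgρ⟩ := Finset.mem_filter.mp hρ
    have hex := (Finset.mem_filter.mp hρR₁).2
    obtain ⟨t, ht⟩ := (hg ρ hex).2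
    exact ⟨ρ, t, by rw [← hgρ]; exact ht⟩
  · -- the identity
    intro f hf
    rw [hphiR f hf]
    have hdrop : ∑ ρ ∈ R₁, CC ρ * eval (α ρ) f = ∑ ρ ∈ R, CC ρ * eval (α ρ) f := by
      rw [hR₁def]
      refine Finset.sum_filter_of_ne fun ρ hρ hne' => ?_
      by_contra hno
      exact hne' (by rw [(mul_eq_zero.mp (hCM ρ hρ)).resolve_right (key1 ρ hno), zero_mul])
    rw [← hdrop,
      ← Finset.sum_fiberwise_of_maps_to (g := g) (t := (univ : Finset (Fin r)))
        (fun ρ _ => Finset.mem_univ (g ρ)) (fun ρ => CC ρ * eval (α ρ) f)]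
    refine Finset.sum_congr rfl fun i _ => ?_
    rw [hμdef, Finset.sum_mul]
    refine Finset.sum_congr rfl fun ρ hρ => ?_
    obtain ⟨hρR₁, hgρ⟩ := Finset.mem_filter.mp hρ
    have hex := (Finset.mem_filter.mp hρR₁).2
    have hαρ : α ρ = u ρ • β i := by rw [← hgρ]; exact hu ρ hex
    rw [hαρ, eval_smul_isHomogeneous hf]
    ring


/-- Proposition 7 (`ida`): if `φ` kills `L₁^{n₁}⋯L_r^{n_r}·S_{d-k-1}` with `Σnᵢ = k+1`,
`n₁ ≥ 2`, and `φ = Σ λⱼ ev(αⱼ)` with `d-k` terms, then `φ` is a combination of the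
evaluations at the zeros `βᵢ` of those `Lᵢ` whose classes occur among the `[αⱼ]`; and if
moreover `φ` does not vanish on `L_{i₁}⋯L_{i_s}·S_{d-s}` for any choice of `s ≤ k` of the
forms, then no decomposition into `d-k` evaluations exists. -/
theorem stmt9 (K : Type) [Field K] [IsAlgClosed K] [CharZero K] (d k r : ℕ)
    (hk : k ≤ (d - 1) / 2) (hr : 0 < r)
    (φ : Module.Dual K (MvPolynomial (Fin 2) K))
    (c : Fin r → Fin 2 → K) (n : Fin r → ℕ) (β : Fin r → Fin 2 → K)
    (hc : ∀ i, c i ≠ 0) (hnp : ∀ i j, i ≠ j → NonProp K (c i) (c j))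
    (hn : ∑ i, n i = k + 1) (hn1 : 2 ≤ n ⟨0, hr⟩)
    (hβ : ∀ i, β i ≠ 0) (hβz : ∀ i, eval (β i) (linForm K (c i)) = 0)
    (hvan : ∀ h : MvPolynomial (Fin 2) K, h.IsHomogeneous (d - k - 1) →
      φ ((∏ i, linForm K (c i) ^ n i) * h) = 0) :
    (∀ (lam : Fin (d - k) → K) (α : Fin (d - k) → Fin 2 → K), (∀ j, α j ≠ 0) →
      (∀ f : MvPolynomial (Fin 2) K, f.IsHomogeneous d →
        φ f = ∑ j, lam j * eval (α j) f) →
      ∃ μ : Fin r → K,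
        (∀ i, ¬ (∃ (j : Fin (d - k)) (t : K), α j = t • β i) → μ i = 0) ∧
        ∀ f : MvPolynomial (Fin 2) K, f.IsHomogeneous d →
          φ f = ∑ i, μ i * eval (β i) f) ∧
    ((∀ (s : ℕ), s ≤ k → ∀ e : Fin s ↪ Fin r,
        ∃ h : MvPolynomial (Fin 2) K, h.IsHomogeneous (d - s) ∧
          φ ((∏ t, linForm K (c (e t))) * h) ≠ 0) →
      ¬ ∃ (lam : Fin (d - k) → K) (α : Fin (d - k) → Fin 2 → K),
          (∀ j, α j ≠ 0) ∧
          ∀ f : MvPolynomial (Fin 2) K, f.IsHomogeneous d →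
            φ f = ∑ j, lam j * eval (α j) f) := by
  classical
  have h2k : k * 2 ≤ d - 1 := (Nat.le_div_iff_mul_le (by norm_num)).mp hk
  have hk1 : 1 ≤ k := by
    have h2 : n ⟨0, hr⟩ ≤ ∑ i, n i :=
      Finset.single_le_sum (fun i _ => Nat.zero_le _) (Finset.mem_univ _)
    omega
  have hkd : k < d := by omega
  constructor
  · intro lam α hα hdecomp
    obtain ⟨μ, _, h2, h3⟩ := core hr hkd φ c n β hc hnp hn hβ hβz hvan lam α hα hdecomp
    exact ⟨μ, h2, h3⟩
  · intro hcond
    rintro ⟨lam, α, hα, hdecomp⟩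
    obtain ⟨μ, h1, h2, h3⟩ := core hr hkd φ c n β hc hnp hn hβ hβz hvan lam α hα hdecomp
    set T : Finset (Fin r) := univ.filter (fun i => μ i ≠ 0) with hTdef
    have hTsub : ∀ i ∈ T, n i ≠ 0 := fun i hi h0 =>
      (Finset.mem_filter.mp hi).2 (h1 i h0)
    have hscard : T.card ≤ k := by
      have hTss : T ⊆ univ.filter (fun i => n i ≠ 0) := fun i hi =>
        Finset.mem_filter.mpr ⟨Finset.mem_univ i, hTsub i hi⟩
      have hc1 : T.card ≤ (univ.filter (fun i => n i ≠ 0)).card := Finset.card_le_card hTss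
      set Sn := univ.filter (fun i => n i ≠ 0) with hSndef
      have h0mem : (⟨0, hr⟩ : Fin r) ∈ Sn :=
        Finset.mem_filter.mpr ⟨Finset.mem_univ _, by omega⟩
      have hsum1 : ∑ i ∈ Sn, n i = k + 1 := by
        rw [hSndef, Finset.sum_filter_ne_zero, hn]
      have hsum2 : n ⟨0, hr⟩ + ∑ i ∈ Sn.erase ⟨0, hr⟩, n i = ∑ i ∈ Sn, n i :=
        Finset.add_sum_erase _ _ h0mem
      have hsum3 : (Sn.erase ⟨0, hr⟩).card ≤ ∑ i ∈ Sn.erase ⟨0, hr⟩, n i := by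
        have := Finset.card_nsmul_le_sum (Sn.erase ⟨0, hr⟩) n 1
          (fun x hx => Nat.one_le_iff_ne_zero.mpr
            ((Finset.mem_filter.mp (Finset.mem_of_mem_erase hx)).2))
        simpa using this
      have hcard0 : (Sn.erase ⟨0, hr⟩).card = Sn.card - 1 := Finset.card_erase_of_mem h0mem
      omega
    obtain ⟨h, hh, hne⟩ := hcond T.card hscard (T.orderEmbOfFin rfl).toEmbedding
    apply hne
    have hprodhom : ((∏ t, linForm K (c ((T.orderEmbOfFin rfl).toEmbedding t))) * h).IsHomogeneous d := by
      have hp1 : (∏ t : Fin T.card,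
          linForm K (c ((T.orderEmbOfFin rfl).toEmbedding t))).IsHomogeneous T.card := by
        have := MvPolynomial.IsHomogeneous.prod univ
          (fun t : Fin T.card => linForm K (c ((T.orderEmbOfFin rfl).toEmbedding t)))
          (fun _ => 1) (fun t _ => isHomogeneous_linForm _)
        simpa using this
      have hmul := hp1.mul hh
      have harith : T.card + (d - T.card) = d := by omega
      rwa [harith] at hmul
    rw [h3 _ hprodhom]
    refine Finset.sum_eq_zero fun i _ => ?_
    by_cases hμi : μ i = 0
    · rw [hμi, zero_mul]
    · have hiT : i ∈ T := Finset.mem_filter.mpr ⟨Finset.mem_univ _, hμi⟩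
      obtain ⟨t0, ht0⟩ : ∃ t0, (T.orderEmbOfFin rfl).toEmbedding t0 = i := by
        have hrange : i ∈ Set.range (T.orderEmbOfFin rfl) := by
          rw [Finset.range_orderEmbOfFin]
          exact Finset.mem_coe.mpr hiT
        exact hrange
      have hz : eval (β i) ((∏ t, linForm K (c ((T.orderEmbOfFin rfl).toEmbedding t))) * h) = 0 := by
        rw [map_mul, map_prod]
        have hzero : ∏ t : Fin T.card,
            eval (β i) (linForm K (c ((T.orderEmbOfFin rfl).toEmbedding t))) = 0 :=
          Finset.prod_eq_zero (Finset.mem_univ t0) (by rw [ht0]; exact hβz i)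
        rw [hzero, zero_mul]
      rw [hz, mul_zero]
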